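/- Let R ≥ 2 be an integer. For every integer p > 0, the proportion of graphs G in G_{n,R} which have distinct vertices v and w with deg_G(v) ≤ R−2, deg_G(w) ≤ R−1, and a path of length p from v to w, tends to 0 as n → ∞. -/

import Mathlib

open Filter Topology

/-- The degree of a vertex `v` in a simple graph `G`. -/
noncomputable def degS {n : ℕ} (G : SimpleGraph (Fin n)) (v : Fin n) : ℕ :=
  Set.ncard {w | G.Adj v w}

/-- The proportion of graphs on `{1,…,n}` with maximum degree at most `R`
that satisfy the property `P`. -/
noncomputable def graphProp (n R : ℕ) (P : SimpleGraph (Fin n) → Prop) : ℝ :=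
  (Nat.card {G : SimpleGraph (Fin n) // (∀ v, degS G v ≤ R) ∧ P G} : ℝ) /
  (Nat.card {G : SimpleGraph (Fin n) // ∀ v, degS G v ≤ R} : ℝ)

open Finset SimpleGraph
open scoped Classical

namespace Aux

variable {n : ℕ}

noncomputable def nbr (G : SimpleGraph (Fin n)) (v : Fin n) : Finset (Fin n) :=
  Finset.univ.filter (fun w => G.Adj v w)

lemma mem_nbr {G : SimpleGraph (Fin n)} {v w : Fin n} : w ∈ nbr G v ↔ G.Adj v w := by
  simp [nbr]

noncomputable def fdeg (G : SimpleGraph (Fin n)) (v : Fin n) : ℕ := (nbr G v).card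

lemma degS_eq_fdeg (G : SimpleGraph (Fin n)) (v : Fin n) : degS G v = fdeg G v := by
  rw [degS, fdeg, Set.ncard_eq_toFinset_card']
  congr 1
  ext w
  simp [nbr]

noncomputable def Gset (n R : ℕ) : Finset (SimpleGraph (Fin n)) :=
  Finset.univ.filter (fun G => ∀ v, fdeg G v ≤ R)

lemma mem_Gset {R : ℕ} {G : SimpleGraph (Fin n)} : G ∈ Gset n R ↔ ∀ v, fdeg G v ≤ R := by
  simp [Gset]

lemma Gset_nonempty (n R : ℕ) : (Gset n R).Nonempty := by
  refine ⟨⊥, ?_⟩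
  rw [mem_Gset]
  intro v
  have : nbr (⊥ : SimpleGraph (Fin n)) v = ∅ := by ext w; simp [nbr]
  simp [fdeg, this]

noncomputable def defSet (R : ℕ) (G : SimpleGraph (Fin n)) : Finset (Fin n) :=
  Finset.univ.filter (fun v => fdeg G v ≤ R - 1)

noncomputable def adjPairs (G : SimpleGraph (Fin n)) : Finset (Fin n × Fin n) :=
  Finset.univ.filter (fun q => G.Adj q.1 q.2)

/-- generic double-counting helper -/
lemma card_pairs {α β : Type*} [Fintype α] [Fintype β] {Φ : Finset (α × β)}
    (S : Finset α) (F : α → Finset β)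
    (hΦ : ∀ t : α × β, t ∈ Φ ↔ t.1 ∈ S ∧ t.2 ∈ F t.1) :
    Φ.card = ∑ a ∈ S, (F a).card := by
  rw [Finset.card_eq_sum_card_fiberwise (f := Prod.fst) (t := S)
    (by intro x hx; exact ((hΦ x).mp hx).1)]
  refine Finset.sum_congr rfl fun a ha => ?_
  refine Finset.card_bij' (fun t _ => t.2) (fun b _ => (a, b)) ?_ ?_ ?_ ?_
  · intro t ht
    simp only [Finset.mem_filter] at ht
    have h2 := ((hΦ t).mp ht.1).2
    exact ht.2 ▸ h2
  · intro b hb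
    simp only [Finset.mem_filter]
    exact ⟨(hΦ (a, b)).mpr ⟨ha, hb⟩, trivial⟩
  · intro t ht
    simp only [Finset.mem_filter] at ht
    exact Prod.ext ht.2.symm rfl
  · intro b hb
    rfl

lemma adjPairs_card (G : SimpleGraph (Fin n)) :
    (adjPairs G).card = ∑ v, fdeg G v := by
  rw [card_pairs (Finset.univ : Finset (Fin n)) (nbr G)
    (by intro t; simp [adjPairs, mem_nbr])]
  rfl

lemma adjPairs_card_le {R : ℕ} {G : SimpleGraph (Fin n)} (hG : G ∈ Gset n R) :
    (adjPairs G).card ≤ n * R := by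
  rw [adjPairs_card]
  calc ∑ v, fdeg G v ≤ ∑ _v : Fin n, R := Finset.sum_le_sum fun v _ => (mem_Gset.mp hG) v
  _ = n * R := by simp [Finset.sum_const, mul_comm]

end Aux

namespace Aux

variable {n : ℕ}

noncomputable def addE (G : SimpleGraph (Fin n)) (u w : Fin n) : SimpleGraph (Fin n) :=
  SimpleGraph.fromEdgeSet (G.edgeSet ∪ {s(u,w)})

lemma addE_adj {G : SimpleGraph (Fin n)} {u w : Fin n} (huw : u ≠ w) (x y : Fin n) :
    (addE G u w).Adj x y ↔ G.Adj x y ∨ s(x,y) = s(u,w) := by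
  rw [addE, SimpleGraph.fromEdgeSet_adj]
  simp only [Set.mem_union, Set.mem_singleton_iff, SimpleGraph.mem_edgeSet]
  constructor
  · rintro ⟨h, _⟩; exact h
  · rintro (h | h)
    · exact ⟨Or.inl h, h.ne⟩
    · refine ⟨Or.inr h, ?_⟩
      rw [Sym2.eq_iff] at h
      rcases h with ⟨rfl, rfl⟩ | ⟨rfl, rfl⟩
      · exact huw
      · exact huw.symm

lemma addE_comm {G : SimpleGraph (Fin n)} {u w : Fin n} : addE G u w = addE G w u := by
  rw [addE, addE, Sym2.eq_swap]

lemma addE_edgeSet {G : SimpleGraph (Fin n)} {u w : Fin n} (huw : u ≠ w) :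
    (addE G u w).edgeSet = G.edgeSet ∪ {s(u,w)} := by
  rw [addE, SimpleGraph.edgeSet_fromEdgeSet]
  ext e
  simp only [Set.mem_diff, Set.mem_setOf_eq]
  constructor
  · rintro ⟨h, _⟩; exact h
  · intro h
    refine ⟨h, ?_⟩
    rcases h with h | h
    · exact G.not_isDiag_of_mem_edgeSet h
    · rw [Set.mem_singleton_iff] at h
      subst h
      simp [Sym2.isDiag_iff_proj_eq, huw]

lemma addE_nbr_u {G : SimpleGraph (Fin n)} {u w : Fin n} (huw : u ≠ w) :
    nbr (addE G u w) u ⊆ insert w (nbr G u) := by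
  intro y hy
  rw [mem_nbr, addE_adj huw] at hy
  simp only [Finset.mem_insert, mem_nbr]
  rcases hy with h | h
  · tauto
  · rw [Sym2.eq_iff] at h
    rcases h with ⟨h1, rfl⟩ | ⟨rfl, h2⟩
    · tauto
    · exact absurd rfl huw

lemma addE_nbr_other {G : SimpleGraph (Fin n)} {u w x : Fin n} (huw : u ≠ w)
    (hx : x ≠ u) (hx' : x ≠ w) : nbr (addE G u w) x ⊆ nbr G x := by
  intro y hy
  rw [mem_nbr, addE_adj huw] at hy
  rw [mem_nbr]
  rcases hy with h | h
  · exact h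
  · rw [Sym2.eq_iff] at h
    rcases h with ⟨rfl, rfl⟩ | ⟨rfl, rfl⟩ <;> tauto

lemma addE_deg_le {R : ℕ} {G : SimpleGraph (Fin n)} {u w : Fin n} (huw : u ≠ w)
    (hG : ∀ v, fdeg G v ≤ R) (hu : fdeg G u ≤ R - 1) (hw : fdeg G w ≤ R - 1)
    (hR : 1 ≤ R) : ∀ x, fdeg (addE G u w) x ≤ R := by
  intro x
  by_cases hxu : x = u
  · calc fdeg (addE G u w) x ≤ (insert w (nbr G x)).card := by
          rw [hxu]; exact Finset.card_le_card (addE_nbr_u huw)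
    _ ≤ 1 + fdeg G x := by rw [add_comm]; exact Finset.card_insert_le _ _
    _ ≤ R := by have := hu; rw [hxu]; omega
  · by_cases hxw : x = w
    · calc fdeg (addE G u w) x ≤ (insert u (nbr G x)).card := by
            rw [hxw, addE_comm]; exact Finset.card_le_card (addE_nbr_u huw.symm)
      _ ≤ 1 + fdeg G x := by rw [add_comm]; exact Finset.card_insert_le _ _
      _ ≤ R := by have := hw; rw [hxw]; omega
    · exact (Finset.card_le_card (addE_nbr_other huw hxu hxw)).trans (hG x)

noncomputable def pair2 (R : ℕ) (G : SimpleGraph (Fin n)) : Finset (Fin n × Fin n) :=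
  Finset.univ.filter (fun q => q.1 ≠ q.2 ∧ fdeg G q.1 ≤ R - 1 ∧ fdeg G q.2 ≤ R - 1 ∧
    ¬ G.Adj q.1 q.2)

noncomputable def Phi2 (n R : ℕ) : Finset (SimpleGraph (Fin n) × (Fin n × Fin n)) :=
  Finset.univ.filter (fun t => t.1 ∈ Gset n R ∧ t.2 ∈ pair2 R t.1)

noncomputable def Psi2 (n R : ℕ) : Finset (SimpleGraph (Fin n) × (Fin n × Fin n)) :=
  Finset.univ.filter (fun t => t.1 ∈ Gset n R ∧ t.2 ∈ adjPairs t.1)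

lemma mem_Phi2 {R : ℕ} {t : SimpleGraph (Fin n) × (Fin n × Fin n)} :
    t ∈ Phi2 n R ↔ t.1 ∈ Gset n R ∧ t.2 ∈ pair2 R t.1 := by simp [Phi2]

lemma mem_Psi2 {R : ℕ} {t : SimpleGraph (Fin n) × (Fin n × Fin n)} :
    t ∈ Psi2 n R ↔ t.1 ∈ Gset n R ∧ t.2 ∈ adjPairs t.1 := by simp [Psi2]

lemma Phi2_card_le_Psi2 (R : ℕ) (hR : 1 ≤ R) : (Phi2 n R).card ≤ (Psi2 n R).card := by
  refine Finset.card_le_card_of_injOn (fun t => (addE t.1 t.2.1 t.2.2, t.2)) ?_ ?_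
  · intro t ht
    rw [Finset.mem_coe, mem_Phi2] at ht
    obtain ⟨hG, hq⟩ := ht
    simp only [pair2, Finset.mem_filter, Finset.mem_univ, true_and] at hq
    obtain ⟨hne, h1, h2, hna⟩ := hq
    rw [Finset.mem_coe, mem_Psi2]
    constructor
    · rw [mem_Gset]
      exact addE_deg_le hne (mem_Gset.mp hG) h1 h2 hR
    · simp only [adjPairs, Finset.mem_filter, Finset.mem_univ, true_and]
      rw [addE_adj hne]
      exact Or.inr rfl
  · intro t ht t' ht' heq
    simp only [Prod.mk.injEq] at heq
    obtain ⟨hgr, hpr⟩ := heq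
    rw [Finset.mem_coe, mem_Phi2] at ht ht'
    obtain ⟨hG, hq⟩ := ht
    obtain ⟨hG', hq'⟩ := ht'
    simp only [pair2, Finset.mem_filter, Finset.mem_univ, true_and] at hq hq'
    have hne := hq.1
    have hne' := hq'.1
    rw [hpr] at hgr hne
    have hE : t.1.edgeSet ∪ {s(t'.2.1, t'.2.2)} = t'.1.edgeSet ∪ {s(t'.2.1, t'.2.2)} := by
      rw [← addE_edgeSet hne', ← addE_edgeSet hne', hgr]
    have h1 : s(t'.2.1, t'.2.2) ∉ t.1.edgeSet := by
      rw [SimpleGraph.mem_edgeSet]; rw [hpr] at hq; exact hq.2.2.2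
    have h2 : s(t'.2.1, t'.2.2) ∉ t'.1.edgeSet := by
      rw [SimpleGraph.mem_edgeSet]; exact hq'.2.2.2
    have hrec : t.1.edgeSet = t'.1.edgeSet := by
      ext e
      constructor
      · intro he
        have h3 : e ∈ t'.1.edgeSet ∪ {s(t'.2.1, t'.2.2)} := by rw [← hE]; exact Or.inl he
        rcases h3 with h | h
        · exact h
        · rw [Set.mem_singleton_iff] at h; subst h; exact absurd he h1
      · intro he
        have h3 : e ∈ t.1.edgeSet ∪ {s(t'.2.1, t'.2.2)} := by rw [hE]; exact Or.inl he
        rcases h3 with h | h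
        · exact h
        · rw [Set.mem_singleton_iff] at h; subst h; exact absurd he h2
    exact Prod.ext (SimpleGraph.edgeSet_inj.mp hrec) hpr

/-- Second moment bound on the number of deficient vertices. -/
lemma sum_d1_sq (R : ℕ) (hR : 1 ≤ R) :
    ∑ G ∈ Gset n R, ((defSet R G).card)^2 ≤ 3 * R * n * (Gset n R).card := by
  have hΦcard : (Phi2 n R).card = ∑ G ∈ Gset n R, (pair2 R G).card :=
    card_pairs _ _ (fun t => mem_Phi2)
  have hΨcard : (Psi2 n R).card = ∑ G ∈ Gset n R, (adjPairs G).card :=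
    card_pairs _ _ (fun t => mem_Psi2)
  have hper : ∀ G ∈ Gset n R,
      ((defSet R G).card)^2 ≤ (pair2 R G).card + (adjPairs G).card + n := by
    intro G _
    have hsub : (defSet R G) ×ˢ (defSet R G) ⊆
        pair2 R G ∪ adjPairs G ∪ Finset.univ.filter (fun q : Fin n × Fin n => q.1 = q.2) := by
      intro q hq
      simp only [Finset.mem_product, defSet, Finset.mem_filter, Finset.mem_univ, true_and] at hq
      simp only [Finset.mem_union, pair2, adjPairs, Finset.mem_filter, Finset.mem_univ, true_and]
      by_cases h1 : q.1 = q.2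
      · tauto
      · by_cases h2 : G.Adj q.1 q.2 <;> tauto
    have hdiag : (Finset.univ.filter (fun q : Fin n × Fin n => q.1 = q.2)).card ≤ n := by
      have hss : (Finset.univ.filter (fun q : Fin n × Fin n => q.1 = q.2)) ⊆
          Finset.univ.image (fun x : Fin n => (x, x)) := by
        intro q hq
        simp only [Finset.mem_filter] at hq
        simp only [Finset.mem_image]
        exact ⟨q.1, Finset.mem_univ _, Prod.ext rfl hq.2⟩
      calc _ ≤ (Finset.univ.image (fun x : Fin n => (x, x))).card := Finset.card_le_card hss
      _ ≤ (Finset.univ : Finset (Fin n)).card := Finset.card_image_le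
      _ = n := by simp
    calc ((defSet R G).card)^2 = ((defSet R G) ×ˢ (defSet R G)).card := by
          rw [Finset.card_product]; ring
    _ ≤ _ := Finset.card_le_card hsub
    _ ≤ (pair2 R G ∪ adjPairs G).card
        + (Finset.univ.filter (fun q : Fin n × Fin n => q.1 = q.2)).card :=
          Finset.card_union_le _ _
    _ ≤ (pair2 R G).card + (adjPairs G).card + n := by
          have := Finset.card_union_le (pair2 R G) (adjPairs G)
          omega
  calc ∑ G ∈ Gset n R, ((defSet R G).card)^2
      ≤ ∑ G ∈ Gset n R, ((pair2 R G).card + (adjPairs G).card + n) :=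
        Finset.sum_le_sum hper
    _ = (∑ G ∈ Gset n R, (pair2 R G).card) + (∑ G ∈ Gset n R, (adjPairs G).card)
        + n * (Gset n R).card := by
        rw [Finset.sum_add_distrib, Finset.sum_add_distrib, Finset.sum_const, smul_eq_mul,
          mul_comm]
    _ ≤ (∑ G ∈ Gset n R, (adjPairs G).card) + (∑ G ∈ Gset n R, (adjPairs G).card)
        + n * (Gset n R).card := by
        have h := Phi2_card_le_Psi2 (n := n) R hR
        rw [hΦcard, hΨcard] at h
        omega
    _ ≤ n * R * (Gset n R).card + n * R * (Gset n R).card + n * (Gset n R).card := by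
        have h1 : (∑ G ∈ Gset n R, (adjPairs G).card) ≤ n * R * (Gset n R).card := by
          calc (∑ G ∈ Gset n R, (adjPairs G).card) ≤ ∑ _G ∈ Gset n R, n * R :=
            Finset.sum_le_sum (fun G hG => adjPairs_card_le hG)
          _ = n * R * (Gset n R).card := by rw [Finset.sum_const, smul_eq_mul, mul_comm]
        omega
    _ ≤ 3 * R * n * (Gset n R).card := by
        have h2 : n * (Gset n R).card ≤ R * (n * (Gset n R).card) :=
          Nat.le_mul_of_pos_left _ hR
        nlinarith [h2]

end Aux

namespace Aux

variable {n : ℕ}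

/-- The switched graph: delete edges ab, cd; add edges va, vc, wb. -/
noncomputable def swG (G : SimpleGraph (Fin n)) (v w a b c d : Fin n) : SimpleGraph (Fin n) :=
  SimpleGraph.fromEdgeSet
    ((G.edgeSet \ ({s(a,b), s(c,d)} : Set (Sym2 (Fin n)))) ∪ {s(v,a), s(v,c), s(w,b)})

/-- Context of hypotheses under which the switching behaves well. -/
structure SwCtx (G : SimpleGraph (Fin n)) (v w a b c d : Fin n) : Prop where
  hab : G.Adj a b
  hcd : G.Adj c d
  hvw : v ≠ w
  hca : c ≠ a
  hcb : c ≠ b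
  hda : d ≠ a
  hdb : d ≠ b
  hav : a ≠ v
  haw : a ≠ w
  hbv : b ≠ v
  hbw : b ≠ w
  hcv : c ≠ v
  hcw : c ≠ w
  hdv : d ≠ v
  hdw : d ≠ w
  hva : ¬ G.Adj v a
  hvb : ¬ G.Adj v b
  hvc : ¬ G.Adj v c
  hvd : ¬ G.Adj v d
  hwa : ¬ G.Adj w a
  hwb : ¬ G.Adj w b
  hwc : ¬ G.Adj w c
  hwd : ¬ G.Adj w d

variable {G : SimpleGraph (Fin n)} {v w a b c d : Fin n}

lemma sw_adj (X : SwCtx G v w a b c d) (x y : Fin n) :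
    (swG G v w a b c d).Adj x y ↔
      ((G.Adj x y ∧ s(x,y) ≠ s(a,b) ∧ s(x,y) ≠ s(c,d)) ∨
        s(x,y) = s(v,a) ∨ s(x,y) = s(v,c) ∨ s(x,y) = s(w,b)) := by
  rw [swG, SimpleGraph.fromEdgeSet_adj]
  simp only [Set.mem_union, Set.mem_diff, Set.mem_insert_iff, Set.mem_singleton_iff,
    SimpleGraph.mem_edgeSet]
  constructor
  · rintro ⟨h, _⟩
    tauto
  · intro h
    refine ⟨by tauto, ?_⟩
    rcases h with ⟨h, _, _⟩ | h | h | h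
    · exact h.ne
    all_goals
      rw [Sym2.eq_iff] at h
      rcases h with ⟨rfl, rfl⟩ | ⟨rfl, rfl⟩
    · exact fun hxy => X.hav (hxy.symm)
    · exact fun hxy => X.hav hxy
    · exact fun hxy => X.hcv hxy.symm
    · exact fun hxy => X.hcv hxy
    · exact fun hxy => X.hbw hxy.symm
    · exact fun hxy => X.hbw hxy

lemma sw_edgeSet (X : SwCtx G v w a b c d) :
    (swG G v w a b c d).edgeSet =
      (G.edgeSet \ ({s(a,b), s(c,d)} : Set (Sym2 (Fin n)))) ∪ {s(v,a), s(v,c), s(w,b)} := by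
  rw [swG, SimpleGraph.edgeSet_fromEdgeSet]
  ext e
  simp only [Set.mem_diff, Set.mem_setOf_eq]
  constructor
  · rintro ⟨h, _⟩; exact h
  · intro h
    refine ⟨h, ?_⟩
    rcases h with ⟨he, _⟩ | he
    · exact G.not_isDiag_of_mem_edgeSet he
    · simp only [Set.mem_insert_iff, Set.mem_singleton_iff] at he
      rcases he with rfl | rfl | rfl <;>
        simp [Sym2.isDiag_iff_proj_eq, X.hav.symm, X.hcv.symm, X.hbw.symm]

/-- Recovery of the original graph: injectivity of the switching. -/
lemma sw_inj {G' : SimpleGraph (Fin n)} (X : SwCtx G v w a b c d)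
    (X' : SwCtx G' v w a b c d)
    (h : swG G v w a b c d = swG G' v w a b c d) : G = G' := by
  have hE := congrArg SimpleGraph.edgeSet h
  rw [sw_edgeSet X, sw_edgeSet X'] at hE
  rw [← SimpleGraph.edgeSet_inj]
  have key : ∀ (H : SimpleGraph (Fin n)), SwCtx H v w a b c d →
      ∀ e, e ∈ H.edgeSet ↔
        (e ∈ (H.edgeSet \ ({s(a,b), s(c,d)} : Set (Sym2 (Fin n)))) ∪ {s(v,a), s(v,c), s(w,b)}
          ∧ e ∉ ({s(v,a), s(v,c), s(w,b)} : Set (Sym2 (Fin n)))) ∨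
        e ∈ ({s(a,b), s(c,d)} : Set (Sym2 (Fin n))) := by
    intro H Y e
    constructor
    · intro he
      by_cases hD : e ∈ ({s(a,b), s(c,d)} : Set (Sym2 (Fin n)))
      · exact Or.inr hD
      · refine Or.inl ⟨Or.inl ⟨he, hD⟩, ?_⟩
        simp only [Set.mem_insert_iff, Set.mem_singleton_iff]
        rintro (rfl | rfl | rfl)
        · exact Y.hva (H.mem_edgeSet.mp he)
        · exact Y.hvc (H.mem_edgeSet.mp he)
        · exact Y.hwb (H.mem_edgeSet.mp he)
    · rintro (⟨he, hA⟩ | hD)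
      · rcases he with ⟨h1, _⟩ | h1
        · exact h1
        · exact absurd h1 hA
      · simp only [Set.mem_insert_iff, Set.mem_singleton_iff] at hD
        rcases hD with rfl | rfl
        · exact H.mem_edgeSet.mpr Y.hab
        · exact H.mem_edgeSet.mpr Y.hcd
  ext e
  rw [key G X e, key G' X' e, hE]

lemma sw_nbr_v (X : SwCtx G v w a b c d) :
    nbr (swG G v w a b c d) v ⊆ insert a (insert c (nbr G v)) := by
  intro y hy
  rw [mem_nbr, sw_adj X] at hy
  simp only [Finset.mem_insert, mem_nbr, Sym2.eq_iff] at hy ⊢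
  rcases hy with ⟨h, _, _⟩ | h | h | h
  · tauto
  · rcases h with ⟨_, rfl⟩ | ⟨rfl, _⟩
    · tauto
    · exact absurd rfl X.hav
  · rcases h with ⟨_, rfl⟩ | ⟨rfl, _⟩
    · tauto
    · exact absurd rfl X.hcv
  · rcases h with ⟨hvw, rfl⟩ | ⟨rfl, _⟩
    · exact absurd hvw X.hvw
    · exact absurd rfl X.hbv

lemma sw_nbr_w (X : SwCtx G v w a b c d) :
    nbr (swG G v w a b c d) w ⊆ insert b (nbr G w) := by
  intro y hy
  rw [mem_nbr, sw_adj X] at hy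
  simp only [Finset.mem_insert, mem_nbr, Sym2.eq_iff] at hy ⊢
  rcases hy with ⟨h, _, _⟩ | h | h | h
  · tauto
  · rcases h with ⟨hwv, _⟩ | ⟨rfl, _⟩
    · exact absurd hwv.symm X.hvw
    · exact absurd rfl X.haw
  · rcases h with ⟨hwv, _⟩ | ⟨rfl, _⟩
    · exact absurd hwv.symm X.hvw
    · exact absurd rfl X.hcw
  · rcases h with ⟨_, rfl⟩ | ⟨rfl, _⟩
    · tauto
    · exact absurd rfl X.hbw

lemma sw_nbr_a (X : SwCtx G v w a b c d) :
    nbr (swG G v w a b c d) a ⊆ insert v (nbr G a \ {b}) := by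
  intro y hy
  rw [mem_nbr, sw_adj X] at hy
  simp only [Finset.mem_insert, Finset.mem_sdiff, Finset.mem_singleton, mem_nbr,
    Sym2.eq_iff] at hy ⊢
  rcases hy with ⟨h, hne1, _⟩ | h | h | h
  · refine Or.inr ⟨h, ?_⟩
    rintro rfl
    exact hne1 rfl
  · rcases h with ⟨hav, _⟩ | ⟨_, rfl⟩
    · exact absurd hav X.hav
    · tauto
  · rcases h with ⟨hav, _⟩ | ⟨hac, _⟩
    · exact absurd hav X.hav
    · exact absurd hac.symm X.hca
  · rcases h with ⟨haw, _⟩ | ⟨hab, _⟩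
    · exact absurd haw X.haw
    · exact absurd hab X.hab.ne

lemma sw_nbr_b (X : SwCtx G v w a b c d) :
    nbr (swG G v w a b c d) b ⊆ insert w (nbr G b \ {a}) := by
  intro y hy
  rw [mem_nbr, sw_adj X] at hy
  simp only [Finset.mem_insert, Finset.mem_sdiff, Finset.mem_singleton, mem_nbr,
    Sym2.eq_iff] at hy ⊢
  rcases hy with ⟨h, hne1, _⟩ | h | h | h
  · refine Or.inr ⟨h, ?_⟩
    rintro rfl
    exact hne1 Sym2.eq_swap
  · rcases h with ⟨hbv, _⟩ | ⟨hba, _⟩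
    · exact absurd hbv X.hbv
    · exact absurd hba.symm X.hab.ne
  · rcases h with ⟨hbv, _⟩ | ⟨hbc, _⟩
    · exact absurd hbv X.hbv
    · exact absurd hbc.symm X.hcb
  · rcases h with ⟨hbw, _⟩ | ⟨_, rfl⟩
    · exact absurd hbw X.hbw
    · tauto

lemma sw_nbr_c (X : SwCtx G v w a b c d) :
    nbr (swG G v w a b c d) c ⊆ insert v (nbr G c \ {d}) := by
  intro y hy
  rw [mem_nbr, sw_adj X] at hy
  simp only [Finset.mem_insert, Finset.mem_sdiff, Finset.mem_singleton, mem_nbr,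
    Sym2.eq_iff] at hy ⊢
  rcases hy with ⟨h, _, hne2⟩ | h | h | h
  · refine Or.inr ⟨h, ?_⟩
    rintro rfl
    exact hne2 rfl
  · rcases h with ⟨hcv, _⟩ | ⟨hca, _⟩
    · exact absurd hcv X.hcv
    · exact absurd hca X.hca
  · rcases h with ⟨hcv, _⟩ | ⟨_, rfl⟩
    · exact absurd hcv X.hcv
    · tauto
  · rcases h with ⟨hcw, _⟩ | ⟨hcb, _⟩
    · exact absurd hcw X.hcw
    · exact absurd hcb X.hcb

lemma sw_nbr_d (X : SwCtx G v w a b c d) :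
    nbr (swG G v w a b c d) d ⊆ nbr G d \ {c} := by
  intro y hy
  rw [mem_nbr, sw_adj X] at hy
  simp only [Finset.mem_sdiff, Finset.mem_singleton, mem_nbr, Sym2.eq_iff] at hy ⊢
  rcases hy with ⟨h, _, hne2⟩ | h | h | h
  · refine ⟨h, ?_⟩
    rintro rfl
    exact hne2 Sym2.eq_swap
  · rcases h with ⟨hdv, _⟩ | ⟨hda, _⟩
    · exact absurd hdv X.hdv
    · exact absurd hda X.hda
  · rcases h with ⟨hdv, _⟩ | ⟨hdc, _⟩
    · exact absurd hdv X.hdv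
    · exact absurd hdc X.hcd.ne.symm
  · rcases h with ⟨hdw, _⟩ | ⟨hdb, _⟩
    · exact absurd hdw X.hdw
    · exact absurd hdb X.hdb

lemma sw_nbr_other (X : SwCtx G v w a b c d) {x : Fin n}
    (h1 : x ≠ v) (h2 : x ≠ w) (h3 : x ≠ a) (h4 : x ≠ b) (h5 : x ≠ c) (h6 : x ≠ d) :
    nbr (swG G v w a b c d) x ⊆ nbr G x := by
  intro y hy
  rw [mem_nbr, sw_adj X] at hy
  rw [mem_nbr]
  rcases hy with ⟨h, _, _⟩ | h | h | h
  · exact h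
  all_goals rw [Sym2.eq_iff] at h; rcases h with ⟨rfl, _⟩ | ⟨rfl, _⟩ <;> tauto

lemma sw_deg_le {R : ℕ} (X : SwCtx G v w a b c d) (hR : 2 ≤ R)
    (hG : ∀ x, fdeg G x ≤ R) (hv : fdeg G v ≤ R - 2) (hw : fdeg G w ≤ R - 1) :
    ∀ x, fdeg (swG G v w a b c d) x ≤ R := by
  intro x
  by_cases h1 : x = v
  · rw [h1]
    have e1 : (nbr G v).card = fdeg G v := rfl
    calc fdeg (swG G v w a b c d) v ≤ (insert a (insert c (nbr G v))).card :=
          Finset.card_le_card (sw_nbr_v X)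
    _ ≤ (insert c (nbr G v)).card + 1 := Finset.card_insert_le _ _
    _ ≤ R := by have := Finset.card_insert_le c (nbr G v); omega
  by_cases h2 : x = w
  · rw [h2]
    have e1 : (nbr G w).card = fdeg G w := rfl
    calc fdeg (swG G v w a b c d) w ≤ (insert b (nbr G w)).card :=
          Finset.card_le_card (sw_nbr_w X)
    _ ≤ R := by have := Finset.card_insert_le b (nbr G w); omega
  by_cases h3 : x = a
  · rw [h3]
    have hb : b ∈ nbr G a := mem_nbr.mpr X.hab
    have hcard : (nbr G a \ {b}).card = fdeg G a - 1 := by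
      rw [Finset.card_sdiff_of_subset (by simpa using hb)]
      simp [fdeg]
    have h1d : 1 ≤ fdeg G a := Finset.card_pos.mpr ⟨b, hb⟩
    have hRa := hG a
    calc fdeg (swG G v w a b c d) a ≤ (insert v (nbr G a \ {b})).card :=
          Finset.card_le_card (sw_nbr_a X)
    _ ≤ R := by have := Finset.card_insert_le v (nbr G a \ {b}); omega
  by_cases h4 : x = b
  · rw [h4]
    have ha : a ∈ nbr G b := mem_nbr.mpr X.hab.symm
    have hcard : (nbr G b \ {a}).card = fdeg G b - 1 := by
      rw [Finset.card_sdiff_of_subset (by simpa using ha)]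
      simp [fdeg]
    have h1d : 1 ≤ fdeg G b := Finset.card_pos.mpr ⟨a, ha⟩
    have hRb := hG b
    calc fdeg (swG G v w a b c d) b ≤ (insert w (nbr G b \ {a})).card :=
          Finset.card_le_card (sw_nbr_b X)
    _ ≤ R := by have := Finset.card_insert_le w (nbr G b \ {a}); omega
  by_cases h5 : x = c
  · rw [h5]
    have hd : d ∈ nbr G c := mem_nbr.mpr X.hcd
    have hcard : (nbr G c \ {d}).card = fdeg G c - 1 := by
      rw [Finset.card_sdiff_of_subset (by simpa using hd)]
      simp [fdeg]
    have h1d : 1 ≤ fdeg G c := Finset.card_pos.mpr ⟨d, hd⟩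
    have hRc := hG c
    calc fdeg (swG G v w a b c d) c ≤ (insert v (nbr G c \ {d})).card :=
          Finset.card_le_card (sw_nbr_c X)
    _ ≤ R := by have := Finset.card_insert_le v (nbr G c \ {d}); omega
  by_cases h6 : x = d
  · rw [h6]
    calc fdeg (swG G v w a b c d) d ≤ (nbr G d \ {c}).card :=
          Finset.card_le_card (sw_nbr_d X)
    _ ≤ fdeg G d := Finset.card_le_card (Finset.sdiff_subset)
    _ ≤ R := hG d
  · exact (Finset.card_le_card (sw_nbr_other X h1 h2 h3 h4 h5 h6)).trans (hG x)

lemma sw_deg_d {R : ℕ} (X : SwCtx G v w a b c d)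
    (hG : ∀ x, fdeg G x ≤ R) : fdeg (swG G v w a b c d) d ≤ R - 1 := by
  have hc : c ∈ nbr G d := mem_nbr.mpr X.hcd.symm
  have hcard : (nbr G d \ {c}).card = fdeg G d - 1 := by
    rw [Finset.card_sdiff_of_subset (by simpa using hc)]
    simp [fdeg]
  have h1 : 1 ≤ fdeg G d := Finset.card_pos.mpr ⟨c, hc⟩
  have := hG d
  calc fdeg (swG G v w a b c d) d ≤ (nbr G d \ {c}).card :=
        Finset.card_le_card (sw_nbr_d X)
  _ ≤ R - 1 := by omega

lemma sw_adj_va (X : SwCtx G v w a b c d) : (swG G v w a b c d).Adj v a := by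
  rw [sw_adj X]; tauto

lemma sw_adj_vc (X : SwCtx G v w a b c d) : (swG G v w a b c d).Adj v c := by
  rw [sw_adj X]; tauto

lemma sw_adj_wb (X : SwCtx G v w a b c d) : (swG G v w a b c d).Adj w b := by
  rw [sw_adj X]; tauto

end Aux

namespace Aux

variable {n : ℕ}

noncomputable def enc (G : SimpleGraph (Fin n)) (x y : Fin n) : ℕ :=
  if h : y ∈ nbr G x then ((nbr G x).equivFin ⟨y, h⟩ : Fin _).val else 0

lemma enc_lt {G : SimpleGraph (Fin n)} {x y : Fin n} (h : y ∈ nbr G x) :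
    enc G x y < fdeg G x := by
  rw [enc, dif_pos h]
  exact ((nbr G x).equivFin ⟨y, h⟩).isLt

lemma enc_inj {G : SimpleGraph (Fin n)} {x y y' : Fin n} (h : y ∈ nbr G x)
    (h' : y' ∈ nbr G x) (he : enc G x y = enc G x y') : y = y' := by
  simp only [enc] at he
  rw [dif_pos h, dif_pos h'] at he
  have := (nbr G x).equivFin.injective (Fin.val_injective he)
  exact congrArg Subtype.val this

variable {p : ℕ}

def chainF (p : ℕ) (G : SimpleGraph (Fin n)) (f : Fin (p+1) → Fin n) : Prop :=
  ∀ i : Fin p, G.Adj (f i.castSucc) (f i.succ)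

noncomputable def chains (p : ℕ) (G : SimpleGraph (Fin n)) : Finset (Fin (p+1) → Fin n) :=
  Finset.univ.filter (fun f => chainF p G f)

lemma chains_card {R : ℕ} {G : SimpleGraph (Fin n)} (hdeg : ∀ x, fdeg G x ≤ R) :
    (chains p G).card ≤ n * R^p := by
  have hle : (chains p G).card ≤
      ((Finset.univ : Finset (Fin n)) ×ˢ Fintype.piFinset (fun _ : Fin p => Finset.range R)).card := by
    refine Finset.card_le_card_of_injOn
      (fun f => (f 0, fun i : Fin p => enc G (f i.castSucc) (f i.succ))) ?_ ?_
    · intro f hf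
      simp only [chains, Finset.mem_coe, Finset.mem_filter] at hf
      simp only [Finset.mem_coe, Finset.mem_product, Finset.mem_univ, true_and, Fintype.mem_piFinset,
        Finset.mem_range]
      intro i
      exact (enc_lt (mem_nbr.mpr (hf.2 i))).trans_le (hdeg _)
    · intro f hf f' hf' heq
      simp only [Finset.mem_coe, chains, Finset.mem_filter] at hf hf'
      simp only [Prod.mk.injEq] at heq
      obtain ⟨h0, hrest⟩ := heq
      have key : ∀ i : Fin p, f i.castSucc = f' i.castSucc → f i.succ = f' i.succ := by
        intro i hi
        have h1 : f i.succ ∈ nbr G (f i.castSucc) := mem_nbr.mpr (hf.2 i)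
        have h2 : f' i.succ ∈ nbr G (f' i.castSucc) := mem_nbr.mpr (hf'.2 i)
        have he := congrFun hrest i
        rw [hi] at h1 he
        exact enc_inj h1 h2 he
      exact funext (Fin.induction h0 key)
  calc (chains p G).card ≤ _ := hle
  _ = n * R^p := by
      rw [Finset.card_product, Fintype.card_piFinset]
      simp

/-- the type of witness data -/
abbrev ZType (n p : ℕ) := (Fin (p+1) → Fin n) × ((Fin n × Fin n) × (Fin n × Fin n))

noncomputable def tgt (R p : ℕ) (G : SimpleGraph (Fin n)) : Finset (ZType n p) :=
  Finset.univ.filter (fun z => chainF p G z.1 ∧ G.Adj (z.1 0) z.2.1.1 ∧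
    G.Adj (z.1 0) z.2.2.1 ∧ G.Adj (z.1 (Fin.last p)) z.2.1.2 ∧ fdeg G z.2.2.2 ≤ R - 1)

lemma tgt_card {R : ℕ} {G : SimpleGraph (Fin n)} (hdeg : ∀ x, fdeg G x ≤ R) :
    (tgt R p G).card ≤ n * R^(p+3) * (defSet R G).card := by
  have hle : (tgt R p G).card ≤
      ((chains p G) ×ˢ (Finset.range R ×ˢ Finset.range R ×ˢ Finset.range R ×ˢ defSet R G)).card := by
    refine Finset.card_le_card_of_injOn
      (fun z => (z.1, (enc G (z.1 0) z.2.1.1, enc G (z.1 0) z.2.2.1,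
        enc G (z.1 (Fin.last p)) z.2.1.2, z.2.2.2))) ?_ ?_
    · intro z hz
      simp only [tgt, Finset.mem_coe, Finset.mem_filter] at hz
      obtain ⟨_, hc, ha, hcc, hb, hd⟩ := hz
      simp only [Finset.mem_coe, Finset.mem_product, Finset.mem_range]
      refine ⟨by simp [chains, hc], ?_, ?_, ?_, ?_⟩
      · exact (enc_lt (mem_nbr.mpr ha)).trans_le (hdeg _)
      · exact (enc_lt (mem_nbr.mpr hcc)).trans_le (hdeg _)
      · exact (enc_lt (mem_nbr.mpr hb)).trans_le (hdeg _)
      · simp [defSet, hd]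
    · intro z hz z' hz' heq
      simp only [Finset.mem_coe, tgt, Finset.mem_filter] at hz hz'
      obtain ⟨_, hc, ha, hcc, hb, hd⟩ := hz
      obtain ⟨_, hc', ha', hcc', hb', hd'⟩ := hz'
      simp only [Prod.mk.injEq] at heq
      obtain ⟨hf, e1, e2, e3, e4⟩ := heq
      rw [hf] at ha hcc hb e1 e2 e3
      have ea : z.2.1.1 = z'.2.1.1 := enc_inj (mem_nbr.mpr ha) (mem_nbr.mpr ha') e1
      have ec : z.2.2.1 = z'.2.2.1 := enc_inj (mem_nbr.mpr hcc) (mem_nbr.mpr hcc') e2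
      have eb : z.2.1.2 = z'.2.1.2 := enc_inj (mem_nbr.mpr hb) (mem_nbr.mpr hb') e3
      refine Prod.ext hf (Prod.ext (Prod.ext ea eb) (Prod.ext ec e4))
  calc (tgt R p G).card ≤ _ := hle
  _ ≤ n * R^(p+3) * (defSet R G).card := by
      rw [Finset.card_product, Finset.card_product, Finset.card_product, Finset.card_product,
        Finset.card_range]
      have := chains_card (p := p) hdeg
      calc (chains p G).card * (R * (R * (R * (defSet R G).card)))
          ≤ (n * R^p) * (R * (R * (R * (defSet R G).card))) :=
            Nat.mul_le_mul_right _ this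
      _ = n * R^(p+3) * (defSet R G).card := by ring

end Aux

namespace Aux

variable {n : ℕ}

def coreP (R p : ℕ) (G : SimpleGraph (Fin n)) (f : Fin (p+1) → Fin n) : Prop :=
  chainF p G f ∧ f 0 ≠ f (Fin.last p) ∧ fdeg G (f 0) ≤ R - 2 ∧
    fdeg G (f (Fin.last p)) ≤ R - 1

noncomputable def badF (p : ℕ) (G : SimpleGraph (Fin n)) (f : Fin (p+1) → Fin n) :
    Finset (Fin n) :=
  (Finset.univ.image f) ∪ nbr G (f 0) ∪ nbr G (f (Fin.last p))

lemma not_bad {p : ℕ} {G : SimpleGraph (Fin n)} {f : Fin (p+1) → Fin n} {x : Fin n}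
    (hx : x ∉ badF p G f) :
    (∀ i, x ≠ f i) ∧ ¬G.Adj (f 0) x ∧ ¬G.Adj (f (Fin.last p)) x := by
  simp only [badF, Finset.mem_union, Finset.mem_image, Finset.mem_univ, true_and, mem_nbr,
    not_or, not_exists] at hx
  obtain ⟨⟨h1, h2⟩, h3⟩ := hx
  exact ⟨fun i hi => h1 i hi.symm, h2, h3⟩

noncomputable def goodP (p : ℕ) (G : SimpleGraph (Fin n)) (f : Fin (p+1) → Fin n) :
    Finset (Fin n × Fin n) :=
  (adjPairs G).filter (fun q => q.1 ∉ badF p G f ∧ q.2 ∉ badF p G f)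

noncomputable def quadSet (p : ℕ) (G : SimpleGraph (Fin n)) (f : Fin (p+1) → Fin n) :
    Finset ((Fin n × Fin n) × (Fin n × Fin n)) :=
  Finset.univ.filter (fun y => y.1 ∈ goodP p G f ∧ y.2 ∈ goodP p G f ∧
    y.2.1 ≠ y.1.1 ∧ y.2.1 ≠ y.1.2 ∧ y.2.2 ≠ y.1.1 ∧ y.2.2 ≠ y.1.2)

noncomputable def wit (R p : ℕ) (G : SimpleGraph (Fin n)) : Finset (ZType n p) :=
  Finset.univ.filter (fun z => coreP R p G z.1 ∧ z.2 ∈ quadSet p G z.1)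

noncomputable def Phi (n R p : ℕ) : Finset (SimpleGraph (Fin n) × ZType n p) :=
  Finset.univ.filter (fun t => t.1 ∈ Gset n R ∧ t.2 ∈ wit R p t.1)

noncomputable def Psi (n R p : ℕ) : Finset (SimpleGraph (Fin n) × ZType n p) :=
  Finset.univ.filter (fun t => t.1 ∈ Gset n R ∧ t.2 ∈ tgt R p t.1)

lemma mem_Phi {R p : ℕ} {t : SimpleGraph (Fin n) × ZType n p} :
    t ∈ Phi n R p ↔ t.1 ∈ Gset n R ∧ t.2 ∈ wit R p t.1 := by simp [Phi]

lemma mem_Psi {R p : ℕ} {t : SimpleGraph (Fin n) × ZType n p} :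
    t ∈ Psi n R p ↔ t.1 ∈ Gset n R ∧ t.2 ∈ tgt R p t.1 := by simp [Psi]

lemma ctx_of_wit {R p : ℕ} {G : SimpleGraph (Fin n)} {z : ZType n p}
    (hz : z ∈ wit R p G) :
    SwCtx G (z.1 0) (z.1 (Fin.last p)) z.2.1.1 z.2.1.2 z.2.2.1 z.2.2.2 := by
  simp only [wit, Finset.mem_filter, Finset.mem_univ, true_and] at hz
  obtain ⟨hcore, hquad⟩ := hz
  simp only [quadSet, Finset.mem_filter, Finset.mem_univ, true_and] at hquad
  obtain ⟨hq, hr, e1, e2, e3, e4⟩ := hquad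
  simp only [goodP, adjPairs, Finset.mem_filter, Finset.mem_univ, true_and] at hq hr
  obtain ⟨hab, hqa, hqb⟩ := hq
  obtain ⟨hcd, hrc, hrd⟩ := hr
  obtain ⟨ha1, ha2, ha3⟩ := not_bad hqa
  obtain ⟨hb1, hb2, hb3⟩ := not_bad hqb
  obtain ⟨hc1, hc2, hc3⟩ := not_bad hrc
  obtain ⟨hd1, hd2, hd3⟩ := not_bad hrd
  exact {
    hab := hab
    hcd := hcd
    hvw := hcore.2.1
    hca := e1
    hcb := e2
    hda := e3
    hdb := e4
    hav := ha1 0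
    haw := ha1 (Fin.last p)
    hbv := hb1 0
    hbw := hb1 (Fin.last p)
    hcv := hc1 0
    hcw := hc1 (Fin.last p)
    hdv := hd1 0
    hdw := hd1 (Fin.last p)
    hva := ha2
    hvb := hb2
    hvc := hc2
    hvd := hd2
    hwa := ha3
    hwb := hb3
    hwc := hc3
    hwd := hd3 }

lemma wit_not_in_f {R p : ℕ} {G : SimpleGraph (Fin n)} {z : ZType n p}
    (hz : z ∈ wit R p G) :
    (∀ i, z.2.1.1 ≠ z.1 i) ∧ (∀ i, z.2.1.2 ≠ z.1 i) ∧
      (∀ i, z.2.2.1 ≠ z.1 i) ∧ (∀ i, z.2.2.2 ≠ z.1 i) := by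
  simp only [wit, Finset.mem_filter, Finset.mem_univ, true_and] at hz
  obtain ⟨hcore, hquad⟩ := hz
  simp only [quadSet, Finset.mem_filter, Finset.mem_univ, true_and] at hquad
  obtain ⟨hq, hr, _, _, _, _⟩ := hquad
  simp only [goodP, Finset.mem_filter] at hq hr
  exact ⟨(not_bad hq.2.1).1, (not_bad hq.2.2).1, (not_bad hr.2.1).1, (not_bad hr.2.2).1⟩

lemma chainF_sw {p : ℕ} {G : SimpleGraph (Fin n)} {v w a b c d : Fin n}
    (X : SwCtx G v w a b c d) {f : Fin (p+1) → Fin n} (hc : chainF p G f)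
    (ha : ∀ i, a ≠ f i) (hb : ∀ i, b ≠ f i) (hcn : ∀ i, c ≠ f i) (hd : ∀ i, d ≠ f i) :
    chainF p (swG G v w a b c d) f := by
  intro i
  rw [sw_adj X]
  refine Or.inl ⟨hc i, ?_, ?_⟩
  · intro h
    rw [Sym2.eq_iff] at h
    rcases h with ⟨h1, h2⟩ | ⟨h1, h2⟩
    · exact ha _ h1.symm
    · exact hb _ h1.symm
  · intro h
    rw [Sym2.eq_iff] at h
    rcases h with ⟨h1, h2⟩ | ⟨h1, h2⟩
    · exact hcn _ h1.symm
    · exact hd _ h1.symm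

lemma Phi_card_le_Psi {R p : ℕ} (hR : 2 ≤ R) :
    (Phi n R p).card ≤ (Psi n R p).card := by
  refine Finset.card_le_card_of_injOn
    (fun t => (swG t.1 (t.2.1 0) (t.2.1 (Fin.last p)) t.2.2.1.1 t.2.2.1.2 t.2.2.2.1 t.2.2.2.2,
      t.2)) ?_ ?_
  · intro t ht
    rw [Finset.mem_coe, mem_Phi] at ht
    obtain ⟨hG, hz⟩ := ht
    have X := ctx_of_wit hz
    have hnf := wit_not_in_f hz
    have hcore : coreP R p t.1 t.2.1 := by
      simp only [wit, Finset.mem_filter, Finset.mem_univ, true_and] at hz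
      exact hz.1
    rw [Finset.mem_coe, mem_Psi]
    constructor
    · rw [mem_Gset]
      exact sw_deg_le X hR (mem_Gset.mp hG) hcore.2.2.1 hcore.2.2.2
    · simp only [tgt, Finset.mem_filter, Finset.mem_univ, true_and]
      refine ⟨?_, ?_, ?_, ?_, ?_⟩
      · exact chainF_sw X hcore.1 hnf.1 hnf.2.1 hnf.2.2.1 hnf.2.2.2
      · exact sw_adj_va X
      · exact sw_adj_vc X
      · exact sw_adj_wb X
      · exact sw_deg_d X (mem_Gset.mp hG)
  · intro t ht t' ht' heq
    simp only [Prod.mk.injEq] at heq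
    obtain ⟨hgr, hzz⟩ := heq
    rw [Finset.mem_coe, mem_Phi] at ht ht'
    have X := ctx_of_wit ht.2
    have X' := ctx_of_wit ht'.2
    rw [hzz] at X hgr
    exact Prod.ext (sw_inj X X' hgr) hzz

end Aux

namespace Aux

variable {n : ℕ}

def K2 (R p : ℕ) : ℕ := 2*R*((p+1)+R+R) + 4*R

lemma badF_card {p R : ℕ} {G : SimpleGraph (Fin n)} {f : Fin (p+1) → Fin n}
    (hG : G ∈ Gset n R) : (badF p G f).card ≤ (p+1) + R + R := by
  have h1 : (Finset.univ.image f).card ≤ p + 1 := by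
    calc (Finset.univ.image f).card ≤ (Finset.univ : Finset (Fin (p+1))).card :=
      Finset.card_image_le
    _ = p + 1 := by simp
  have h2 := (mem_Gset.mp hG) (f 0)
  have h3 := (mem_Gset.mp hG) (f (Fin.last p))
  calc (badF p G f).card ≤ ((Finset.univ.image f) ∪ nbr G (f 0)).card
        + (nbr G (f (Fin.last p))).card := Finset.card_union_le _ _
  _ ≤ (Finset.univ.image f).card + (nbr G (f 0)).card + (nbr G (f (Fin.last p))).card := by
      have := Finset.card_union_le (Finset.univ.image f) (nbr G (f 0))
      omega
  _ ≤ (p+1) + R + R := by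
      have e1 : (nbr G (f 0)).card = fdeg G (f 0) := rfl
      have e2 : (nbr G (f (Fin.last p))).card = fdeg G (f (Fin.last p)) := rfl
      omega

lemma filter_fst_bad {R : ℕ} {G : SimpleGraph (Fin n)} (hG : G ∈ Gset n R)
    (B : Finset (Fin n)) :
    ((adjPairs G).filter (fun q => q.1 ∈ B)).card ≤ B.card * R := by
  have hsub : (adjPairs G).filter (fun q => q.1 ∈ B) ⊆
      B.biUnion (fun x => {x} ×ˢ nbr G x) := by
    intro q hq
    simp only [adjPairs, Finset.mem_filter, Finset.mem_univ, true_and] at hq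
    simp only [Finset.mem_biUnion, Finset.mem_product, Finset.mem_singleton, mem_nbr]
    exact ⟨q.1, hq.2, rfl, hq.1⟩
  calc _ ≤ (B.biUnion (fun x => {x} ×ˢ nbr G x)).card := Finset.card_le_card hsub
  _ ≤ ∑ x ∈ B, ({x} ×ˢ nbr G x).card := Finset.card_biUnion_le
  _ ≤ ∑ _x ∈ B, R := by
      refine Finset.sum_le_sum fun x _ => ?_
      rw [Finset.card_product, Finset.card_singleton, one_mul]
      exact (mem_Gset.mp hG) x
  _ = B.card * R := by rw [Finset.sum_const, smul_eq_mul]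

lemma filter_snd_bad {R : ℕ} {G : SimpleGraph (Fin n)} (hG : G ∈ Gset n R)
    (B : Finset (Fin n)) :
    ((adjPairs G).filter (fun q => q.2 ∈ B)).card ≤ B.card * R := by
  have hsub : (adjPairs G).filter (fun q => q.2 ∈ B) ⊆
      B.biUnion (fun x => (nbr G x) ×ˢ {x}) := by
    intro q hq
    simp only [adjPairs, Finset.mem_filter, Finset.mem_univ, true_and] at hq
    simp only [Finset.mem_biUnion, Finset.mem_product, Finset.mem_singleton, mem_nbr]
    exact ⟨q.2, hq.2, hq.1.symm, rfl⟩
  calc _ ≤ _ := Finset.card_le_card hsub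
  _ ≤ ∑ x ∈ B, ((nbr G x) ×ˢ {x}).card := Finset.card_biUnion_le
  _ ≤ ∑ _x ∈ B, R := by
      refine Finset.sum_le_sum fun x _ => ?_
      rw [Finset.card_product, Finset.card_singleton, mul_one]
      exact (mem_Gset.mp hG) x
  _ = B.card * R := by rw [Finset.sum_const, smul_eq_mul]

lemma goodP_card {p R : ℕ} {G : SimpleGraph (Fin n)} {f : Fin (p+1) → Fin n}
    (hG : G ∈ Gset n R) (hdense : n ≤ ∑ x, fdeg G x) :
    n - 2*R*((p+1)+R+R) ≤ (goodP p G f).card := by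
  set B := badF p G f with hB
  have hsplit : adjPairs G ⊆ goodP p G f ∪ (adjPairs G).filter (fun q => q.1 ∈ B)
      ∪ (adjPairs G).filter (fun q => q.2 ∈ B) := by
    intro q hq
    simp only [Finset.mem_union, goodP, Finset.mem_filter]
    by_cases h1 : q.1 ∈ B
    · tauto
    · by_cases h2 : q.2 ∈ B <;> tauto
  have hcard : (adjPairs G).card ≤ (goodP p G f).card + B.card * R + B.card * R := by
    calc (adjPairs G).card ≤ _ := Finset.card_le_card hsplit
    _ ≤ (goodP p G f ∪ (adjPairs G).filter (fun q => q.1 ∈ B)).card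
        + ((adjPairs G).filter (fun q => q.2 ∈ B)).card := Finset.card_union_le _ _
    _ ≤ (goodP p G f).card + ((adjPairs G).filter (fun q => q.1 ∈ B)).card
        + ((adjPairs G).filter (fun q => q.2 ∈ B)).card := by
        have := Finset.card_union_le (goodP p G f) ((adjPairs G).filter (fun q => q.1 ∈ B))
        omega
    _ ≤ (goodP p G f).card + B.card * R + B.card * R := by
        have := filter_fst_bad hG B
        have := filter_snd_bad hG B
        omega
  have hB2 : B.card ≤ (p+1) + R + R := badF_card hG
  have hA : n ≤ (adjPairs G).card := by rw [adjPairs_card]; exact hdense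
  have : B.card * R ≤ ((p+1)+R+R) * R := Nat.mul_le_mul_right _ hB2
  have hx : 2*R*((p+1)+R+R) = ((p+1)+R+R)*R + ((p+1)+R+R)*R := by ring
  omega

lemma quad_lower {p R : ℕ} {G : SimpleGraph (Fin n)} {f : Fin (p+1) → Fin n}
    (hG : G ∈ Gset n R) (hdense : n ≤ ∑ x, fdeg G x) :
    (n - K2 R p) * (n - K2 R p) ≤ (quadSet p G f).card := by
  set g := goodP p G f with hg
  have hcard : (quadSet p G f).card =
      ∑ q ∈ g, ((g.filter (fun r => r.1 ≠ q.1 ∧ r.1 ≠ q.2 ∧ r.2 ≠ q.1 ∧ r.2 ≠ q.2)).card) := by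
    refine card_pairs _ _ ?_
    intro y
    simp only [quadSet, Finset.mem_filter, Finset.mem_univ, true_and, hg]
  have hper : ∀ q ∈ g, g.card - 4*R ≤
      (g.filter (fun r => r.1 ≠ q.1 ∧ r.1 ≠ q.2 ∧ r.2 ≠ q.1 ∧ r.2 ≠ q.2)).card := by
    intro q hq
    set bad := g.filter (fun r => r.1 = q.1 ∨ r.1 = q.2 ∨ r.2 = q.1 ∨ r.2 = q.2) with hbad
    have hsplit : g ⊆ (g.filter (fun r => r.1 ≠ q.1 ∧ r.1 ≠ q.2 ∧ r.2 ≠ q.1 ∧ r.2 ≠ q.2))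
        ∪ bad := by
      intro r hr
      by_cases h1 : r.1 = q.1
      · exact Finset.mem_union_right _ (Finset.mem_filter.mpr ⟨hr, Or.inl h1⟩)
      by_cases h2 : r.1 = q.2
      · exact Finset.mem_union_right _ (Finset.mem_filter.mpr ⟨hr, Or.inr (Or.inl h2)⟩)
      by_cases h3 : r.2 = q.1
      · exact Finset.mem_union_right _ (Finset.mem_filter.mpr ⟨hr, Or.inr (Or.inr (Or.inl h3))⟩)
      by_cases h4 : r.2 = q.2
      · exact Finset.mem_union_right _ (Finset.mem_filter.mpr ⟨hr, Or.inr (Or.inr (Or.inr h4))⟩)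
      · exact Finset.mem_union_left _ (Finset.mem_filter.mpr ⟨hr, h1, h2, h3, h4⟩)
    have hbadcard : bad.card ≤ 4*R := by
      have hsub : bad ⊆ (({q.1} ×ˢ nbr G q.1) ∪ ({q.2} ×ˢ nbr G q.2))
          ∪ ((nbr G q.1 ×ˢ {q.1}) ∪ (nbr G q.2 ×ˢ {q.2})) := by
        intro r hr
        have hr' : r ∈ g ∧ (r.1 = q.1 ∨ r.1 = q.2 ∨ r.2 = q.1 ∨ r.2 = q.2) :=
          Finset.mem_filter.mp hr
        obtain ⟨hrg, hdisj⟩ := hr'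
        have hadj : G.Adj r.1 r.2 := by
          simp only [hg, goodP, adjPairs, Finset.mem_filter, Finset.mem_univ, true_and] at hrg
          exact hrg.1
        simp only [Finset.mem_union, Finset.mem_product, Finset.mem_singleton, mem_nbr]
        rcases hdisj with h | h | h | h
        · exact Or.inl (Or.inl ⟨h, by rw [← h]; exact hadj⟩)
        · exact Or.inl (Or.inr ⟨h, by rw [← h]; exact hadj⟩)
        · exact Or.inr (Or.inl ⟨by rw [← h]; exact hadj.symm, h⟩)
        · exact Or.inr (Or.inr ⟨by rw [← h]; exact hadj.symm, h⟩)
      have e1 : ({q.1} ×ˢ nbr G q.1).card ≤ R := by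
        rw [Finset.card_product, Finset.card_singleton, one_mul]; exact (mem_Gset.mp hG) _
      have e2 : ({q.2} ×ˢ nbr G q.2).card ≤ R := by
        rw [Finset.card_product, Finset.card_singleton, one_mul]; exact (mem_Gset.mp hG) _
      have e3 : ((nbr G q.1) ×ˢ {q.1}).card ≤ R := by
        rw [Finset.card_product, Finset.card_singleton, mul_one]; exact (mem_Gset.mp hG) _
      have e4 : ((nbr G q.2) ×ˢ {q.2}).card ≤ R := by
        rw [Finset.card_product, Finset.card_singleton, mul_one]; exact (mem_Gset.mp hG) _
      calc bad.card ≤ _ := Finset.card_le_card hsub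
      _ ≤ (({q.1} ×ˢ nbr G q.1) ∪ ({q.2} ×ˢ nbr G q.2)).card
          + ((nbr G q.1 ×ˢ {q.1}) ∪ (nbr G q.2 ×ˢ {q.2})).card := Finset.card_union_le _ _
      _ ≤ 4*R := by
          have u1 := Finset.card_union_le ({q.1} ×ˢ nbr G q.1) ({q.2} ×ˢ nbr G q.2)
          have u2 := Finset.card_union_le ((nbr G q.1) ×ˢ {q.1}) ((nbr G q.2) ×ˢ {q.2})
          omega
    have := Finset.card_le_card hsplit
    have := Finset.card_union_le
      (g.filter (fun r => r.1 ≠ q.1 ∧ r.1 ≠ q.2 ∧ r.2 ≠ q.1 ∧ r.2 ≠ q.2)) bad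
    omega
  have hgood : n - 2*R*((p+1)+R+R) ≤ g.card := goodP_card hG hdense
  have hsum : g.card * (g.card - 4*R) ≤ (quadSet p G f).card := by
    rw [hcard]
    calc g.card * (g.card - 4*R) = ∑ _q ∈ g, (g.card - 4*R) := by
          rw [Finset.sum_const, smul_eq_mul]
    _ ≤ _ := Finset.sum_le_sum hper
  refine le_trans ?_ hsum
  have hk : K2 R p = 2*R*((p+1)+R+R) + 4*R := rfl
  have h1 : n - K2 R p ≤ g.card := by omega
  have h2 : n - K2 R p ≤ g.card - 4*R := by omega
  exact Nat.mul_le_mul h1 h2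

lemma wit_lower {p R : ℕ} {G : SimpleGraph (Fin n)} (hG : G ∈ Gset n R)
    (hdense : n ≤ ∑ x, fdeg G x) {f : Fin (p+1) → Fin n} (hcore : coreP R p G f) :
    (n - K2 R p) * (n - K2 R p) ≤ (wit R p G).card := by
  have hsub : ({f} : Finset (Fin (p+1) → Fin n)) ×ˢ quadSet p G f ⊆ wit R p G := by
    intro z hz
    rw [Finset.mem_product, Finset.mem_singleton] at hz
    simp only [wit, Finset.mem_filter, Finset.mem_univ, true_and]
    rw [hz.1]
    exact ⟨hcore, hz.2⟩
  calc (n - K2 R p) * (n - K2 R p) ≤ (quadSet p G f).card := quad_lower hG hdense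
  _ = (({f} : Finset (Fin (p+1) → Fin n)) ×ˢ quadSet p G f).card := by
      rw [Finset.card_product, Finset.card_singleton, one_mul]
  _ ≤ (wit R p G).card := Finset.card_le_card hsub

def hasProp (R p : ℕ) (G : SimpleGraph (Fin n)) : Prop :=
  ∃ v w : Fin n, v ≠ w ∧ degS G v ≤ R - 2 ∧ degS G w ≤ R - 1 ∧
    ∃ walk : G.Walk v w, walk.IsPath ∧ walk.length = p

lemma coreP_of_hasProp {R p : ℕ} {G : SimpleGraph (Fin n)} (h : hasProp R p G) :
    ∃ f : Fin (p+1) → Fin n, coreP R p G f := by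
  obtain ⟨v, w, hvw, hv, hw, wk, _, hlen⟩ := h
  have hf0 : (fun i : Fin (p+1) => wk.getVert i.val) 0 = v := by simp
  have hfL : (fun i : Fin (p+1) => wk.getVert i.val) (Fin.last p) = w := by
    show wk.getVert p = w
    rw [← hlen]
    exact wk.getVert_length
  refine ⟨fun i => wk.getVert i.val, ?_, ?_, ?_, ?_⟩
  · intro i
    have hlt : (i : ℕ) < wk.length := by rw [hlen]; exact i.isLt
    have := wk.adj_getVert_succ hlt
    simpa using this
  · rw [hf0, hfL]
    exact hvw
  · rw [hf0, ← degS_eq_fdeg]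
    exact hv
  · rw [hfL, ← degS_eq_fdeg]
    exact hw

/-- The master counting inequality for dense graphs with the property. -/
lemma master (R p : ℕ) (hR : 2 ≤ R) :
    ((Gset n R).filter (fun G => n ≤ ∑ x, fdeg G x ∧ hasProp R p G)).card
      * ((n - K2 R p) * (n - K2 R p))
    ≤ n * R^(p+3) * ∑ G ∈ Gset n R, (defSet R G).card := by
  have h1 : (Phi n R p).card = ∑ G ∈ Gset n R, (wit R p G).card :=
    card_pairs _ _ (fun t => mem_Phi)
  have h2 : (Psi n R p).card = ∑ G ∈ Gset n R, (tgt R p G).card :=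
    card_pairs _ _ (fun t => mem_Psi)
  have h3 : (Phi n R p).card ≤ (Psi n R p).card := Phi_card_le_Psi hR
  have h4 : ∑ G ∈ Gset n R, (tgt R p G).card
      ≤ ∑ G ∈ Gset n R, n * R^(p+3) * (defSet R G).card :=
    Finset.sum_le_sum (fun G hG => tgt_card (mem_Gset.mp hG))
  have h5 : ((Gset n R).filter (fun G => n ≤ ∑ x, fdeg G x ∧ hasProp R p G)).card
      * ((n - K2 R p) * (n - K2 R p)) ≤ ∑ G ∈ Gset n R, (wit R p G).card := by
    calc _ = ∑ _G ∈ (Gset n R).filter (fun G => n ≤ ∑ x, fdeg G x ∧ hasProp R p G),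
            ((n - K2 R p) * (n - K2 R p)) := by rw [Finset.sum_const, smul_eq_mul]
    _ ≤ ∑ G ∈ (Gset n R).filter (fun G => n ≤ ∑ x, fdeg G x ∧ hasProp R p G),
            (wit R p G).card := by
        refine Finset.sum_le_sum fun G hG => ?_
        rw [Finset.mem_filter] at hG
        obtain ⟨hGs, hdense, hprop⟩ := hG
        obtain ⟨f, hf⟩ := coreP_of_hasProp hprop
        exact wit_lower hGs hdense hf
    _ ≤ ∑ G ∈ Gset n R, (wit R p G).card :=
        Finset.sum_le_sum_of_subset (Finset.filter_subset _ _)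
  calc _ ≤ ∑ G ∈ Gset n R, (wit R p G).card := h5
  _ = (Phi n R p).card := h1.symm
  _ ≤ (Psi n R p).card := h3
  _ = ∑ G ∈ Gset n R, (tgt R p G).card := h2
  _ ≤ ∑ G ∈ Gset n R, n * R^(p+3) * (defSet R G).card := h4
  _ = n * R^(p+3) * ∑ G ∈ Gset n R, (defSet R G).card := by rw [Finset.mul_sum]

/-- The sparse graphs are rare. -/
lemma sparse_bound (R : ℕ) (hR : 2 ≤ R) :
    ((Gset n R).filter (fun G => ¬ (n ≤ ∑ x, fdeg G x))).card * (n*n)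
      ≤ 12 * R * n * (Gset n R).card := by
  have hper : ∀ G ∈ (Gset n R).filter (fun G => ¬ (n ≤ ∑ x, fdeg G x)),
      n * n ≤ 4 * ((defSet R G).card)^2 := by
    intro G hG
    rw [Finset.mem_filter] at hG
    obtain ⟨hGs, hsp⟩ := hG
    push_neg at hsp
    set FR := Finset.univ.filter (fun x : Fin n => fdeg G x = R) with hFR
    have hcover : (Finset.univ : Finset (Fin n)) ⊆ defSet R G ∪ FR := by
      intro x _
      simp only [Finset.mem_union, defSet, hFR, Finset.mem_filter, Finset.mem_univ, true_and]
      have := (mem_Gset.mp hGs) x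
      omega
    have hn : n ≤ (defSet R G).card + FR.card := by
      have := Finset.card_le_card hcover
      have hu : (Finset.univ : Finset (Fin n)).card = n := by simp
      have := Finset.card_union_le (defSet R G) FR
      omega
    have hFRb : R * FR.card < n := by
      calc R * FR.card = ∑ _x ∈ FR, R := by rw [Finset.sum_const, smul_eq_mul, mul_comm]
      _ = ∑ x ∈ FR, fdeg G x := by
          refine Finset.sum_congr rfl fun x hx => ?_
          simp only [hFR, Finset.mem_filter] at hx
          exact hx.2.symm
      _ ≤ ∑ x, fdeg G x := Finset.sum_le_sum_of_subset (Finset.filter_subset _ _)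
      _ < n := hsp
    have h2FR : 2 * FR.card < n := by
      have : 2 * FR.card ≤ R * FR.card := Nat.mul_le_mul_right _ hR
      omega
    have hd : n ≤ 2 * (defSet R G).card := by omega
    calc n * n ≤ (2 * (defSet R G).card) * (2 * (defSet R G).card) := Nat.mul_le_mul hd hd
    _ = 4 * ((defSet R G).card)^2 := by ring
  calc ((Gset n R).filter (fun G => ¬ (n ≤ ∑ x, fdeg G x))).card * (n*n)
      = ∑ _G ∈ (Gset n R).filter (fun G => ¬ (n ≤ ∑ x, fdeg G x)), (n*n) := by
        rw [Finset.sum_const, smul_eq_mul]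
    _ ≤ ∑ G ∈ (Gset n R).filter (fun G => ¬ (n ≤ ∑ x, fdeg G x)), 4 * ((defSet R G).card)^2 :=
        Finset.sum_le_sum hper
    _ ≤ ∑ G ∈ Gset n R, 4 * ((defSet R G).card)^2 :=
        Finset.sum_le_sum_of_subset (Finset.filter_subset _ _)
    _ = 4 * ∑ G ∈ Gset n R, ((defSet R G).card)^2 := by rw [Finset.mul_sum]
    _ ≤ 4 * (3 * R * n * (Gset n R).card) :=
        Nat.mul_le_mul_left _ (sum_d1_sq R (by omega))
    _ = 12 * R * n * (Gset n R).card := by ring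

end Aux

namespace Aux

variable {n : ℕ}

lemma graphProp_eq (n R : ℕ) (P : SimpleGraph (Fin n) → Prop) :
    graphProp n R P = (((Gset n R).filter P).card : ℝ) / ((Gset n R).card : ℝ) := by
  rw [graphProp]
  congr 2
  · rw [Nat.card_eq_fintype_card, Fintype.card_subtype]
    congr 1
    ext G
    simp [Gset, degS_eq_fdeg, Finset.mem_filter]
  · rw [Nat.card_eq_fintype_card, Fintype.card_subtype]
    congr 1
    ext G
    simp [Gset, degS_eq_fdeg]

lemma real_calc (R p n N A S D : ℕ) (Sd : ℝ) (hn : 2 * K2 R p + 2 ≤ n) (hN : 0 < N)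
    (hA : A ≤ S + D) (hS : S * n ≤ 12 * R * N) (hSd0 : 0 ≤ Sd)
    (hSd2 : Sd^2 ≤ 3*(R:ℝ)*(n:ℝ)*(N:ℝ)^2)
    (hDm : (D:ℝ) * (((n - K2 R p : ℕ)):ℝ) * (((n - K2 R p : ℕ)):ℝ)
      ≤ (n:ℝ) * (R:ℝ)^(p+3) * Sd) :
    (A:ℝ)/(N:ℝ) ≤ (12*(R:ℝ) + 4*(R:ℝ)^(p+3)*Real.sqrt (3*(R:ℝ))) / Real.sqrt n := by
  have hn1 : 1 ≤ n := by omega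
  set x := Real.sqrt n with hxdef
  have hnR : (0:ℝ) < n := by exact_mod_cast Nat.lt_of_lt_of_le Nat.zero_lt_one hn1
  have hx0 : 0 < x := Real.sqrt_pos.mpr hnR
  have hxx : x * x = n := Real.mul_self_sqrt (le_of_lt hnR)
  have hxn : x ≤ n := by
    have h1 : (n:ℝ) ≤ (n:ℝ)^2 := by nlinarith [(by exact_mod_cast hn1 : (1:ℝ) ≤ (n:ℝ))]
    calc x ≤ Real.sqrt ((n:ℝ)^2) := Real.sqrt_le_sqrt h1
    _ = n := Real.sqrt_sq (le_of_lt hnR)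
  have hN0 : (0:ℝ) ≤ N := Nat.cast_nonneg N
  have hSd : Sd ≤ Real.sqrt (3*(R:ℝ)) * x * N := by
    calc Sd = Real.sqrt (Sd^2) := (Real.sqrt_sq hSd0).symm
    _ ≤ Real.sqrt ((3*(R:ℝ)*(n:ℝ)) * (N:ℝ)^2) := Real.sqrt_le_sqrt (by nlinarith)
    _ = Real.sqrt (3*(R:ℝ)*(n:ℝ)) * N := by
        rw [Real.sqrt_mul (by positivity), Real.sqrt_sq hN0]
    _ = Real.sqrt (3*(R:ℝ)) * x * N := by
        rw [Real.sqrt_mul (by positivity) (n:ℝ)]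
  have hkn : K2 R p ≤ n := by omega
  have hnk : (n:ℝ)/2 ≤ ((n - K2 R p : ℕ) : ℝ) := by
    rw [Nat.cast_sub hkn]
    have : (2 * (K2 R p : ℝ) + 2 : ℝ) ≤ (n:ℝ) := by exact_mod_cast hn
    linarith
  have hDx : (D:ℝ) * x ≤ 4*(R:ℝ)^(p+3)*Real.sqrt (3*(R:ℝ))*(N:ℝ) := by
    have hD0 : (0:ℝ) ≤ D := Nat.cast_nonneg D
    have hnk0 : (0:ℝ) ≤ ((n - K2 R p : ℕ) : ℝ) := Nat.cast_nonneg _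
    have h2 : (D:ℝ) * ((n:ℝ)/2 * ((n:ℝ)/2)) ≤ (n:ℝ) * (R:ℝ)^(p+3) * Sd := by
      refine le_trans ?_ hDm
      have h0 : (0:ℝ) ≤ (n:ℝ)/2 := by linarith
      have hsq : ((n:ℝ)/2) * ((n:ℝ)/2) ≤ ((n - K2 R p : ℕ):ℝ) * ((n - K2 R p : ℕ):ℝ) :=
        mul_le_mul hnk hnk h0 hnk0
      calc (D:ℝ) * ((n:ℝ)/2 * ((n:ℝ)/2))
          ≤ (D:ℝ) * (((n - K2 R p : ℕ):ℝ) * ((n - K2 R p : ℕ):ℝ)) :=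
            mul_le_mul_of_nonneg_left hsq hD0
      _ = (D:ℝ) * ((n - K2 R p : ℕ):ℝ) * ((n - K2 R p : ℕ):ℝ) := by ring
    have h3 : (D:ℝ) * ((n:ℝ)/2 * ((n:ℝ)/2))
        ≤ (n:ℝ) * (R:ℝ)^(p+3) * (Real.sqrt (3*(R:ℝ)) * x * N) := by
      refine le_trans h2 ?_
      exact mul_le_mul_of_nonneg_left hSd (by positivity)
    have h4 : (D:ℝ) * x * ((n:ℝ) * (n:ℝ)) = 4 * ((D:ℝ) * ((n:ℝ)/2 * ((n:ℝ)/2))) * x := by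
      ring
    have h5 : (D:ℝ) * x * ((n:ℝ)*(n:ℝ))
        ≤ 4 * ((n:ℝ) * (R:ℝ)^(p+3) * (Real.sqrt (3*(R:ℝ)) * x * N)) * x := by
      rw [h4]
      exact mul_le_mul_of_nonneg_right (mul_le_mul_of_nonneg_left h3 (by norm_num)) hx0.le
    have h6 : 4 * ((n:ℝ) * (R:ℝ)^(p+3) * (Real.sqrt (3*(R:ℝ)) * x * N)) * x
        = (4*(R:ℝ)^(p+3)*Real.sqrt (3*(R:ℝ))*(N:ℝ)) * ((n:ℝ) * (x * x)) := by
      ring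
    rw [h6, hxx] at h5
    have hpos : (0:ℝ) < (n:ℝ) * (n:ℝ) := by positivity
    exact le_of_mul_le_mul_right (by rw [mul_assoc] at h5 ⊢; exact h5) hpos
  have hSx : (S:ℝ) * x ≤ 12*(R:ℝ)*(N:ℝ) := by
    have h1 : (S:ℝ) * (n:ℝ) ≤ 12*(R:ℝ)*(N:ℝ) := by exact_mod_cast hS
    calc (S:ℝ) * x ≤ (S:ℝ) * n := mul_le_mul_of_nonneg_left hxn (Nat.cast_nonneg S)
    _ ≤ 12*(R:ℝ)*(N:ℝ) := h1
  rw [div_le_div_iff₀ (by exact_mod_cast hN) hx0]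
  have hA' : (A:ℝ) ≤ (S:ℝ) + (D:ℝ) := by exact_mod_cast hA
  calc (A:ℝ) * x ≤ ((S:ℝ) + (D:ℝ)) * x := mul_le_mul_of_nonneg_right hA' hx0.le
  _ = (S:ℝ)*x + (D:ℝ)*x := by ring
  _ ≤ 12*(R:ℝ)*(N:ℝ) + 4*(R:ℝ)^(p+3)*Real.sqrt (3*(R:ℝ))*(N:ℝ) := add_le_add hSx hDx
  _ = (12*(R:ℝ) + 4*(R:ℝ)^(p+3)*Real.sqrt (3*(R:ℝ))) * (N:ℝ) := by ring

lemma final_bound (R p : ℕ) (hR : 2 ≤ R) {n : ℕ} (hn : 2 * K2 R p + 2 ≤ n) :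
    graphProp n R (fun G => hasProp R p G)
      ≤ (12*(R:ℝ) + 4*(R:ℝ)^(p+3)*Real.sqrt (3*(R:ℝ))) / Real.sqrt n := by
  have hN : 0 < (Gset n R).card := Finset.card_pos.mpr (Gset_nonempty n R)
  -- A ≤ S + D
  have hA : ((Gset n R).filter (fun G => hasProp R p G)).card ≤
      ((Gset n R).filter (fun G => ¬ (n ≤ ∑ x, fdeg G x))).card +
      ((Gset n R).filter (fun G => n ≤ ∑ x, fdeg G x ∧ hasProp R p G)).card := by
    have hsub : (Gset n R).filter (fun G => hasProp R p G) ⊆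
        (Gset n R).filter (fun G => ¬ (n ≤ ∑ x, fdeg G x)) ∪
        (Gset n R).filter (fun G => n ≤ ∑ x, fdeg G x ∧ hasProp R p G) := by
      intro G hG
      rw [Finset.mem_filter] at hG
      by_cases hd : n ≤ ∑ x, fdeg G x
      · exact Finset.mem_union_right _ (Finset.mem_filter.mpr ⟨hG.1, hd, hG.2⟩)
      · exact Finset.mem_union_left _ (Finset.mem_filter.mpr ⟨hG.1, hd⟩)
    calc _ ≤ _ := Finset.card_le_card hsub
    _ ≤ _ := Finset.card_union_le _ _
  have hS : ((Gset n R).filter (fun G => ¬ (n ≤ ∑ x, fdeg G x))).card * n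
      ≤ 12 * R * (Gset n R).card := by
    have h := sparse_bound (n := n) R hR
    have h' : ((Gset n R).filter (fun G => ¬ (n ≤ ∑ x, fdeg G x))).card * n * n
        ≤ 12 * R * (Gset n R).card * n := by
      calc _ = ((Gset n R).filter (fun G => ¬ (n ≤ ∑ x, fdeg G x))).card * (n * n) := by ring
      _ ≤ 12 * R * n * (Gset n R).card := h
      _ = 12 * R * (Gset n R).card * n := by ring
    exact Nat.le_of_mul_le_mul_right h' (by omega)
  -- Cauchy-Schwarz bound on the sum of deficiencies
  have hSd0 : (0:ℝ) ≤ ∑ G ∈ Gset n R, ((defSet R G).card : ℝ) :=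
    Finset.sum_nonneg fun _ _ => Nat.cast_nonneg _
  have hCS : (∑ G ∈ Gset n R, ((defSet R G).card : ℝ))^2
      ≤ ((Gset n R).card : ℝ) * ∑ G ∈ Gset n R, ((defSet R G).card : ℝ)^2 := by
    have h := Finset.sum_mul_sq_le_sq_mul_sq (Gset n R) (fun _ => (1:ℝ))
      (fun G => ((defSet R G).card : ℝ))
    simpa using h
  have hsum2 : ∑ G ∈ Gset n R, ((defSet R G).card : ℝ)^2
      ≤ 3*(R:ℝ)*(n:ℝ)*((Gset n R).card : ℝ) := by
    have h := sum_d1_sq (n := n) R (by omega)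
    have h' : ((∑ G ∈ Gset n R, ((defSet R G).card)^2 : ℕ) : ℝ)
        ≤ ((3*R*n*(Gset n R).card : ℕ) : ℝ) := by exact_mod_cast h
    push_cast at h'
    exact h'
  have hSd2 : (∑ G ∈ Gset n R, ((defSet R G).card : ℝ))^2
      ≤ 3*(R:ℝ)*(n:ℝ)*(((Gset n R).card : ℝ))^2 := by
    have hc : (0:ℝ) ≤ ((Gset n R).card : ℝ) := Nat.cast_nonneg _
    nlinarith [hCS, hsum2, hc]
  have hDm : (((Gset n R).filter (fun G => n ≤ ∑ x, fdeg G x ∧ hasProp R p G)).card : ℝ)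
      * (((n - K2 R p : ℕ)):ℝ) * (((n - K2 R p : ℕ)):ℝ)
      ≤ (n:ℝ) * (R:ℝ)^(p+3) * ∑ G ∈ Gset n R, ((defSet R G).card : ℝ) := by
    have hD := master (n := n) R p hR
    have h' : ((((Gset n R).filter (fun G => n ≤ ∑ x, fdeg G x ∧ hasProp R p G)).card
        * ((n - K2 R p) * (n - K2 R p)) : ℕ) : ℝ)
        ≤ ((n * R^(p+3) * ∑ G ∈ Gset n R, (defSet R G).card : ℕ) : ℝ) := by
      exact_mod_cast hD
    push_cast at h'
    linarith [h']
  rw [graphProp_eq]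
  exact real_calc R p n (Gset n R).card _ _ _ _ hn hN hA hS hSd0 hSd2 hDm

lemma sqrt_nat_atTop : Tendsto (fun n : ℕ => Real.sqrt n) atTop atTop := by
  rw [tendsto_atTop_atTop]
  intro b
  refine ⟨Nat.ceil (b^2), fun a ha => ?_⟩
  have h1 : (b^2 : ℝ) ≤ (a : ℝ) := by
    calc (b^2 : ℝ) ≤ (Nat.ceil (b^2) : ℝ) := Nat.le_ceil _
    _ ≤ (a : ℝ) := by exact_mod_cast ha
  calc b ≤ |b| := le_abs_self b
  _ = Real.sqrt (b^2) := (Real.sqrt_sq_eq_abs b).symm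
  _ ≤ Real.sqrt a := Real.sqrt_le_sqrt h1

lemma graphProp_nonneg (n R : ℕ) (P : SimpleGraph (Fin n) → Prop) :
    0 ≤ graphProp n R P := by
  rw [graphProp]
  positivity

end Aux

open Aux in
theorem stmt14 (R : ℕ) (hR : 2 ≤ R) (p : ℕ) (hp : 0 < p) :
    Tendsto (fun n : ℕ => graphProp n R (fun G =>
        ∃ v w : Fin n, v ≠ w ∧ degS G v ≤ R - 2 ∧ degS G w ≤ R - 1 ∧
          ∃ walk : G.Walk v w, walk.IsPath ∧ walk.length = p))
      atTop (𝓝 0) := by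
  show Tendsto (fun n : ℕ => graphProp n R (fun G => hasProp R p G)) atTop (𝓝 0)
  have hC : Tendsto (fun n : ℕ =>
      (12*(R:ℝ) + 4*(R:ℝ)^(p+3)*Real.sqrt (3*R)) / Real.sqrt n) atTop (𝓝 0) :=
    Tendsto.div_atTop tendsto_const_nhds sqrt_nat_atTop
  refine squeeze_zero' ?_ ?_ hC
  · exact Filter.Eventually.of_forall fun n => graphProp_nonneg n R _
  · rw [Filter.eventually_atTop]
    exact ⟨2 * K2 R p + 2, fun n hn => final_bound R p hR hn⟩
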